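/- Let (a,p) be a truthful mechanism with finite approximation ratio ρ. If, on cost matrix A1, the mechanism allocates proper task n+2 to machine 1 but does not allocate proper task n+1 to machine 1, then ρ ≥ 1 + min{ r^{-1}, a }. -/

import Mathlib

open scoped ENNReal BigOperators

/-- A feasible allocation of `m` tasks to `n` machines: a 0-1 matrix (represented as a
`Bool`-valued matrix) in which every task is assigned to exactly one machine. -/
structure Alloc (n m : ℕ) where
  assign : Fin n → Fin m → Bool
  feasible : ∀ j : Fin m, ∃! i : Fin n, assign i j = true

/-- The total processing cost incurred by machine `i` under allocation `A`
when her (true) cost row is `ti`. -/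
noncomputable def machineCost {n m : ℕ} (A : Alloc n m) (ti : Fin m → ℝ≥0∞) (i : Fin n) :
    ℝ≥0∞ :=
  ∑ j : Fin m, if A.assign i j then ti j else 0

/-- A deterministic (direct-revelation) mechanism: an allocation rule together with a
payment rule. -/
structure Mechanism (n m : ℕ) where
  alloc : (Fin n → Fin m → ℝ≥0∞) → Alloc n m
  pay : (Fin n → Fin m → ℝ≥0∞) → Fin n → ℝ

/-- The (quasi-linear) utility of machine `i` when the reported cost matrix is `t` and her
true cost row is `trueRow`: her payment minus her incurred true cost, in the extended reals. -/
noncomputable def utility {n m : ℕ} (M : Mechanism n m) (t : Fin n → Fin m → ℝ≥0∞)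
    (trueRow : Fin m → ℝ≥0∞) (i : Fin n) : EReal :=
  (M.pay t i : EReal) - ((machineCost (M.alloc t) trueRow i : ℝ≥0∞) : EReal)

/-- Truthfulness: no machine can strictly increase her utility by misreporting her row,
whatever the (fixed) reports of the other machines are. -/
def Truthful {n m : ℕ} (M : Mechanism n m) : Prop :=
  ∀ (t : Fin n → Fin m → ℝ≥0∞) (i : Fin n) (ti' : Fin m → ℝ≥0∞),
    utility M (Function.update t i ti') (t i) i ≤ utility M t (t i) i

/-- The makespan of allocation `A` on cost matrix `t`. -/
noncomputable def makespan {n m : ℕ} (A : Alloc n m) (t : Fin n → Fin m → ℝ≥0∞) : ℝ≥0∞ :=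
  ⨆ i : Fin n, machineCost A (t i) i

/-- The optimal makespan on cost matrix `t`. -/
noncomputable def optMakespan (n m : ℕ) (t : Fin n → Fin m → ℝ≥0∞) : ℝ≥0∞ :=
  ⨅ A : Alloc n m, makespan A t

/-- The mechanism `M` has approximation ratio (at most) `ρ`. -/
def ApproxRatioLE {n m : ℕ} (M : Mechanism n m) (ρ : ℝ) : Prop :=
  1 ≤ ρ ∧ ∀ t : Fin n → Fin m → ℝ≥0∞,
    makespan (M.alloc t) t ≤ ENNReal.ofReal ρ * optMakespan n m t

/-- The cost matrix `A0` on `n` machines and `2n-1` tasks. Tasks with index `< n` (0-based)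
are the dummy tasks: machine `i` has cost `0` on dummy task `i` and `∞` on the other dummy
tasks. Tasks with index `n, n+1, …, 2n-2` (0-based) are the proper tasks `n+1, …, 2n-1` of
the paper: machines `1` and `2` (indices `0`, `1`) have cost `1` on task `n+1` (index `n`)
and cost `a^{-(j-2)}` on task `n+j` (index `n+j-1`) for `j = 2,…,n-1`; machine `i`
(index `i-1 ≥ 2`), for `3 ≤ i ≤ n`, has cost `a^{-(i-3)}` on task `n+i-1` (index `n+i-2`)
and `∞` on every other proper task. -/
noncomputable def A0 (n : ℕ) (a : ℝ) : Fin n → Fin (2 * n - 1) → ℝ≥0∞ := fun i j =>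
  if (j : ℕ) < n then
    (if (j : ℕ) = (i : ℕ) then 0 else ⊤)
  else if (i : ℕ) ≤ 1 then
    (if (j : ℕ) = n then 1 else ENNReal.ofReal (a⁻¹ ^ ((j : ℕ) - n - 1)))
  else
    (if (j : ℕ) = n + (i : ℕ) - 1 then ENNReal.ofReal (a⁻¹ ^ ((j : ℕ) - n - 1)) else ⊤)

/-- The cost matrix `A1`: identical to `A0` except for machine `1`'s (index `0`'s) costs on
the proper tasks, which become `r` on task `n+1` (index `n`) and `a^{-(j-1)}` on task `n+j`
(index `n+j-1`) for `j = 2,…,n-1`. -/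
noncomputable def A1 (n : ℕ) (r a : ℝ) : Fin n → Fin (2 * n - 1) → ℝ≥0∞ := fun i j =>
  if (i : ℕ) = 0 ∧ n ≤ (j : ℕ) then
    (if (j : ℕ) = n then ENNReal.ofReal r else ENNReal.ofReal (a⁻¹ ^ ((j : ℕ) - n)))
  else A0 n a i j

namespace CaseThree

variable {n m : ℕ}

lemma term_le_machineCost (A : Alloc n m) (ti : Fin m → ℝ≥0∞) (i : Fin n) (j : Fin m)
    (h : A.assign i j = true) : ti j ≤ machineCost A ti i := by
  have : ti j = if A.assign i j then ti j else 0 := by rw [h]; simp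
  rw [this, machineCost]
  exact Finset.single_le_sum (f := fun j => if A.assign i j then ti j else 0)
    (fun _ _ => zero_le) (Finset.mem_univ j)

lemma two_terms_le_machineCost (A : Alloc n m) (ti : Fin m → ℝ≥0∞) (i : Fin n)
    (j1 j2 : Fin m) (hne : j1 ≠ j2)
    (h1 : A.assign i j1 = true) (h2 : A.assign i j2 = true) :
    ti j1 + ti j2 ≤ machineCost A ti i := by
  have e : ∑ j ∈ ({j1, j2} : Finset (Fin m)), (if A.assign i j then ti j else 0)
      = ti j1 + ti j2 := by
    rw [Finset.sum_pair hne, h1, h2]; simp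
  rw [machineCost, ← e]
  exact Finset.sum_le_sum_of_subset (Finset.subset_univ _)

lemma machineCost_le_makespan (A : Alloc n m) (t : Fin n → Fin m → ℝ≥0∞) (i : Fin n) :
    machineCost A (t i) i ≤ makespan A t := le_iSup (fun i => machineCost A (t i) i) i

lemma assign_eq_false_of_top (A : Alloc n m) (t : Fin n → Fin m → ℝ≥0∞) (i : Fin n)
    (j : Fin m) (hfin : makespan A t ≠ ⊤) (htop : t i j = ⊤) : A.assign i j = false := by
  by_contra h
  have h' : A.assign i j = true := by simpa using h
  have := (term_le_machineCost A (t i) i j h').trans (machineCost_le_makespan A t i)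
  rw [htop] at this
  exact hfin (top_le_iff.mp this)

lemma assign_forced (A : Alloc n m) (t : Fin n → Fin m → ℝ≥0∞) (i0 : Fin n) (j : Fin m)
    (hfin : makespan A t ≠ ⊤) (htop : ∀ i, i ≠ i0 → t i j = ⊤) :
    A.assign i0 j = true := by
  obtain ⟨i, hi, -⟩ := A.feasible j
  rcases eq_or_ne i i0 with rfl | hne
  · exact hi
  · have := assign_eq_false_of_top A t i j hfin (htop i hne)
    rw [hi] at this; exact absurd this (by simp)

lemma assign_forced_two (A : Alloc n m) (t : Fin n → Fin m → ℝ≥0∞) (i0 i1 : Fin n)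
    (j : Fin m) (hfin : makespan A t ≠ ⊤)
    (htop : ∀ i, i ≠ i0 → i ≠ i1 → t i j = ⊤) (h0 : A.assign i0 j = false) :
    A.assign i1 j = true := by
  obtain ⟨i, hi, -⟩ := A.feasible j
  rcases eq_or_ne i i1 with rfl | hne1
  · exact hi
  rcases eq_or_ne i i0 with rfl | hne0
  · rw [hi] at h0; exact absurd h0 (by simp)
  · have := assign_eq_false_of_top A t i j hfin (htop i hne0 hne1)
    rw [hi] at this; exact absurd this (by simp)

lemma machineCost_ne_top_of (A : Alloc n m) (ti ti' : Fin m → ℝ≥0∞) (i : Fin n)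
    (h : machineCost A ti i ≠ ⊤) (hj : ∀ j, ti j ≠ ⊤ → ti' j ≠ ⊤) :
    machineCost A ti' i ≠ ⊤ := by
  rw [machineCost, ← lt_top_iff_ne_top, ENNReal.sum_lt_top]
  intro j _
  rw [machineCost, ← lt_top_iff_ne_top, ENNReal.sum_lt_top] at h
  have := h j (Finset.mem_univ j)
  by_cases hb : A.assign i j = true
  · rw [hb] at this ⊢
    simp only [if_true] at this ⊢
    exact lt_top_iff_ne_top.mpr (hj j (lt_top_iff_ne_top.mp this))
  · simp only [Bool.not_eq_true] at hb
    rw [hb]; simp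


lemma ereal_coe_ennreal (C : ℝ≥0∞) (h : C ≠ ⊤) : ((C.toReal : ℝ) : EReal) = (C : EReal) := by
  rw [← EReal.toReal_coe_ennreal, EReal.coe_toReal] <;> simp [h]

lemma wmon (M : Mechanism n m) (hM : Truthful M) (t : Fin n → Fin m → ℝ≥0∞) (i : Fin n)
    (ti' : Fin m → ℝ≥0∞)
    (h1 : machineCost (M.alloc t) (t i) i ≠ ⊤)
    (h2 : machineCost (M.alloc (Function.update t i ti')) (t i) i ≠ ⊤)
    (h3 : machineCost (M.alloc t) ti' i ≠ ⊤)
    (h4 : machineCost (M.alloc (Function.update t i ti')) ti' i ≠ ⊤) :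
    machineCost (M.alloc t) (t i) i + machineCost (M.alloc (Function.update t i ti')) ti' i
      ≤ machineCost (M.alloc (Function.update t i ti')) (t i) i
        + machineCost (M.alloc t) ti' i := by
  set t' := Function.update t i ti' with ht'
  have e1 : utility M t' (t i) i ≤ utility M t (t i) i := hM t i ti'
  have e2 : utility M t ti' i ≤ utility M t' ti' i := by
    have h := hM t' i (t i)
    have e : Function.update t' i (t i) = t := by
      rw [ht', Function.update_idem, Function.update_eq_self]
    have e' : t' i = ti' := by rw [ht', Function.update_self]
    rw [e, e'] at h
    exact h
  rw [utility, utility] at e1 e2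
  rw [← ereal_coe_ennreal _ h1, ← ereal_coe_ennreal _ h2] at e1
  rw [← ereal_coe_ennreal _ h3, ← ereal_coe_ennreal _ h4] at e2
  rw [← EReal.coe_sub, ← EReal.coe_sub] at e1 e2
  have r1 : M.pay t' i - (machineCost (M.alloc t') (t i) i).toReal
      ≤ M.pay t i - (machineCost (M.alloc t) (t i) i).toReal := by exact_mod_cast e1
  have r2 : M.pay t i - (machineCost (M.alloc t) ti' i).toReal
      ≤ M.pay t' i - (machineCost (M.alloc t') ti' i).toReal := by exact_mod_cast e2
  have key : (machineCost (M.alloc t) (t i) i).toReal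
      + (machineCost (M.alloc t') ti' i).toReal
      ≤ (machineCost (M.alloc t') (t i) i).toReal
      + (machineCost (M.alloc t) ti' i).toReal := by linarith
  rw [← ENNReal.toReal_add h1 h4, ← ENNReal.toReal_add h2 h3] at key
  exact (ENNReal.toReal_le_toReal (by simp [h1, h4]) (by simp [h2, h3])).mp key

lemma wmon_two (M : Mechanism n m) (hM : Truthful M) (t : Fin n → Fin m → ℝ≥0∞) (i : Fin n)
    (ti' : Fin m → ℝ≥0∞) (j1 j2 : Fin m) (hne : j1 ≠ j2)
    (hagree : ∀ j, j ≠ j1 → j ≠ j2 → ti' j = t i j)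
    (h1 : machineCost (M.alloc t) (t i) i ≠ ⊤)
    (h4 : machineCost (M.alloc (Function.update t i ti')) ti' i ≠ ⊤)
    (htr : ∀ j, t i j ≠ ⊤ → ti' j ≠ ⊤) (htr' : ∀ j, ti' j ≠ ⊤ → t i j ≠ ⊤) :
    ((if (M.alloc t).assign i j1 then t i j1 else 0)
      + (if (M.alloc (Function.update t i ti')).assign i j1 then ti' j1 else 0))
    + ((if (M.alloc t).assign i j2 then t i j2 else 0)
      + (if (M.alloc (Function.update t i ti')).assign i j2 then ti' j2 else 0))
    ≤ ((if (M.alloc (Function.update t i ti')).assign i j1 then t i j1 else 0)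
      + (if (M.alloc t).assign i j1 then ti' j1 else 0))
    + ((if (M.alloc (Function.update t i ti')).assign i j2 then t i j2 else 0)
      + (if (M.alloc t).assign i j2 then ti' j2 else 0)) := by
  set t' := Function.update t i ti' with ht'
  have h2 : machineCost (M.alloc t') (t i) i ≠ ⊤ :=
    machineCost_ne_top_of _ ti' (t i) i h4 htr'
  have h3 : machineCost (M.alloc t) ti' i ≠ ⊤ :=
    machineCost_ne_top_of _ (t i) ti' i h1 htr
  have key := wmon M hM t i ti' h1 h2 h3 h4
  set F : Fin m → ℝ≥0∞ := fun j =>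
    (if (M.alloc t).assign i j then t i j else 0)
      + (if (M.alloc t').assign i j then ti' j else 0) with hF
  set G : Fin m → ℝ≥0∞ := fun j =>
    (if (M.alloc t').assign i j then t i j else 0)
      + (if (M.alloc t).assign i j then ti' j else 0) with hG
  have keyFG : ∑ j, F j ≤ ∑ j, G j := by
    rw [hF, hG]
    simp only [Finset.sum_add_distrib]
    exact key
  have hFne : ∑ j, F j ≠ ⊤ := by
    rw [hF]; simp only [Finset.sum_add_distrib]
    exact ENNReal.add_ne_top.mpr ⟨h1, h4⟩
  have hoff : ∀ j ∈ ({j1, j2} : Finset (Fin m))ᶜ, F j = G j := by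
    intro j hj
    simp only [Finset.mem_compl, Finset.mem_insert, Finset.mem_singleton, not_or] at hj
    rw [hF, hG]
    simp only
    rw [hagree j hj.1 hj.2, add_comm]
  have split : ∀ H : Fin m → ℝ≥0∞,
      ∑ j, H j = ∑ j ∈ ({j1, j2} : Finset (Fin m)), H j
        + ∑ j ∈ ({j1, j2} : Finset (Fin m))ᶜ, H j := by
    intro H
    rw [Finset.sum_add_sum_compl]
  rw [split F, split G, Finset.sum_congr rfl hoff] at keyFG
  have hcne : ∑ j ∈ ({j1, j2} : Finset (Fin m))ᶜ, G j ≠ ⊤ := by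
    intro htop
    apply hFne
    rw [split F, Finset.sum_congr rfl hoff, htop, add_top]
  have := (ENNReal.add_le_add_iff_right hcne).mp keyFG
  rw [Finset.sum_pair hne, Finset.sum_pair hne] at this
  exact this


def mkAlloc (f : Fin m → Fin n) : Alloc n m where
  assign i j := decide (f j = i)
  feasible j := ⟨f j, by simp, fun i h => (of_decide_eq_true h).symm⟩

lemma machineCost_mkAlloc (f : Fin m → Fin n) (ti : Fin m → ℝ≥0∞) (i : Fin n) :
    machineCost (mkAlloc f) ti i = ∑ j, if f j = i then ti j else 0 := by
  simp [machineCost, mkAlloc]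

lemma sum_owner_le (f : Fin m → Fin n) (ti : Fin m → ℝ≥0∞) (i : Fin n)
    (s : Finset (Fin m)) (hs : ∀ j, f j = i → j ∈ s) :
    (∑ j, if f j = i then ti j else 0) ≤ ∑ j ∈ s, ti j := by
  have e : ∑ j ∈ s, (if f j = i then ti j else 0) = ∑ j, if f j = i then ti j else 0 := by
    apply Finset.sum_subset (Finset.subset_univ s)
    intro x _ hx
    rw [if_neg (fun he => hx (hs x he))]
  rw [← e]
  exact Finset.sum_le_sum (fun j _ => by split <;> simp)

def owner1 (n : ℕ) (hn : 3 ≤ n) : Fin (2 * n - 1) → Fin n := fun j =>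
  if h : (j : ℕ) < n then ⟨j, h⟩
  else if (j : ℕ) ≤ n + 1 then ⟨0, by omega⟩
  else ⟨(j : ℕ) - n + 1, by have := j.isLt; omega⟩

lemma owner1_val (hn : 3 ≤ n) (j : Fin (2 * n - 1)) :
    ((owner1 n hn j : Fin n) : ℕ)
      = if (j : ℕ) < n then (j : ℕ) else if (j : ℕ) ≤ n + 1 then 0 else (j : ℕ) - n + 1 := by
  unfold owner1
  split_ifs <;> rfl

lemma makespan_owner1_le (hn : 3 ≤ n) (t : Fin n → Fin (2 * n - 1) → ℝ≥0∞) (C : ℝ≥0∞)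
    (h0 : ∀ (i : Fin n) (jA jB jC : Fin (2 * n - 1)), (i : ℕ) = 0 → (jA : ℕ) = 0 →
        (jB : ℕ) = n → (jC : ℕ) = n + 1 → t i jA + (t i jB + t i jC) ≤ C)
    (h1 : ∀ (i : Fin n) (j : Fin (2 * n - 1)), (i : ℕ) = 1 → (j : ℕ) = 1 → t i j ≤ C)
    (hd : ∀ (i : Fin n) (j : Fin (2 * n - 1)), 2 ≤ (i : ℕ) → (j : ℕ) = (i : ℕ) → t i j = 0)
    (h3 : ∀ (i : Fin n) (j : Fin (2 * n - 1)), 3 ≤ (i : ℕ) → (j : ℕ) = n + (i : ℕ) - 1 →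
        t i j ≤ C) :
    makespan (mkAlloc (owner1 n hn)) t ≤ C := by
  rw [makespan]
  apply iSup_le
  intro i
  rw [machineCost_mkAlloc]
  rcases Nat.lt_or_ge (i : ℕ) 1 with hi0 | hi1
  · -- machine 0
    have hie : i = ⟨0, by omega⟩ := by apply Fin.ext; simpa using hi0
    rw [hie]
    refine le_trans (sum_owner_le _ _ _
      ({⟨0, by omega⟩, ⟨n, by omega⟩, ⟨n + 1, by omega⟩} : Finset (Fin (2 * n - 1))) ?_) ?_
    · intro j hj
      have hv := owner1_val hn j
      rw [hj] at hv
      simp only [Fin.val_mk] at hv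
      have hjl := j.isLt
      simp only [Finset.mem_insert, Finset.mem_singleton, Fin.ext_iff, Fin.val_mk]
      split_ifs at hv <;> omega
    · rw [Finset.sum_insert (by
          simp only [Finset.mem_insert, Finset.mem_singleton, Fin.ext_iff, Fin.val_mk]
          omega),
        Finset.sum_insert (by
          simp only [Finset.mem_singleton, Fin.ext_iff, Fin.val_mk]
          omega), Finset.sum_singleton]
      exact h0 _ _ _ _ rfl rfl rfl rfl
  rcases Nat.lt_or_ge (i : ℕ) 2 with hi1' | hi2
  · -- machine 1
    have hie : i = ⟨1, by omega⟩ := by apply Fin.ext; simp only [Fin.val_mk]; omega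
    rw [hie]
    refine le_trans (sum_owner_le _ _ _ ({⟨1, by omega⟩} : Finset (Fin (2 * n - 1))) ?_) ?_
    · intro j hj
      have hv := owner1_val hn j
      rw [hj] at hv
      simp only [Fin.val_mk] at hv
      have hjl := j.isLt
      simp only [Finset.mem_singleton, Fin.ext_iff, Fin.val_mk]
      split_ifs at hv <;> omega
    · rw [Finset.sum_singleton]; exact h1 _ _ rfl rfl
  rcases Nat.lt_or_ge (i : ℕ) 3 with hi2' | hi3
  · -- machine 2 : only its dummy
    refine le_trans (sum_owner_le _ _ _
      ({⟨(i : ℕ), by have := i.isLt; omega⟩} : Finset (Fin (2 * n - 1))) ?_) ?_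
    · intro j hj
      have hv := owner1_val hn j
      rw [hj] at hv
      have hjl := j.isLt
      simp only [Finset.mem_singleton, Fin.ext_iff, Fin.val_mk]
      split_ifs at hv <;> omega
    · rw [Finset.sum_singleton, hd i _ hi2 rfl]
      exact zero_le
  · -- machines i ≥ 3 : dummy + proper task n+i-1
    refine le_trans (sum_owner_le _ _ _
      ({⟨(i : ℕ), by have := i.isLt; omega⟩,
        ⟨n + (i : ℕ) - 1, by have := i.isLt; omega⟩} : Finset (Fin (2 * n - 1))) ?_) ?_
    · intro j hj
      have hv := owner1_val hn j
      rw [hj] at hv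
      have hjl := j.isLt
      have hil := i.isLt
      simp only [Finset.mem_insert, Finset.mem_singleton, Fin.ext_iff, Fin.val_mk]
      split_ifs at hv <;> omega
    · rw [Finset.sum_pair (by
          simp only [ne_eq, Fin.ext_iff, Fin.val_mk]
          have := i.isLt; omega),
        hd i _ (by omega) rfl, zero_add]
      exact h3 i _ hi3 rfl


lemma ite_ofReal (b : Bool) (v : ℝ) :
    (if b then ENNReal.ofReal v else 0) = ENNReal.ofReal (if b then v else 0) := by
  cases b <;> simp

lemma ite_nonneg (b : Bool) (v : ℝ) (hv : 0 ≤ v) : 0 ≤ (if b then v else 0) := by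
  cases b <;> simp [hv]

lemma wmon_two_real (M : Mechanism n m) (hM : Truthful M) (t : Fin n → Fin m → ℝ≥0∞)
    (i : Fin n) (ti' : Fin m → ℝ≥0∞) (j1 j2 : Fin m) (hne : j1 ≠ j2)
    (hagree : ∀ j, j ≠ j1 → j ≠ j2 → ti' j = t i j)
    (h1 : machineCost (M.alloc t) (t i) i ≠ ⊤)
    (h4 : machineCost (M.alloc (Function.update t i ti')) ti' i ≠ ⊤)
    (htr : ∀ j, t i j ≠ ⊤ → ti' j ≠ ⊤) (htr' : ∀ j, ti' j ≠ ⊤ → t i j ≠ ⊤)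
    (v1 v2 w1 w2 : ℝ) (hv1 : 0 ≤ v1) (hv2 : 0 ≤ v2) (hw1 : 0 ≤ w1) (hw2 : 0 ≤ w2)
    (e1 : t i j1 = ENNReal.ofReal v1) (e2 : t i j2 = ENNReal.ofReal v2)
    (f1 : ti' j1 = ENNReal.ofReal w1) (f2 : ti' j2 = ENNReal.ofReal w2) :
    ((if (M.alloc t).assign i j1 then v1 else 0)
      + (if (M.alloc (Function.update t i ti')).assign i j1 then w1 else 0))
    + ((if (M.alloc t).assign i j2 then v2 else 0)
      + (if (M.alloc (Function.update t i ti')).assign i j2 then w2 else 0))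
    ≤ ((if (M.alloc (Function.update t i ti')).assign i j1 then v1 else 0)
      + (if (M.alloc t).assign i j1 then w1 else 0))
    + ((if (M.alloc (Function.update t i ti')).assign i j2 then v2 else 0)
      + (if (M.alloc t).assign i j2 then w2 else 0)) := by
  have K := wmon_two M hM t i ti' j1 j2 hne hagree h1 h4 htr htr'
  rw [e1, e2, f1, f2] at K
  set b1 := (M.alloc t).assign i j1 with hb1
  set b2 := (M.alloc t).assign i j2 with hb2
  set c1 := (M.alloc (Function.update t i ti')).assign i j1 with hc1
  set c2 := (M.alloc (Function.update t i ti')).assign i j2 with hc2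
  have eL : ENNReal.ofReal (((if b1 then v1 else 0) + (if c1 then w1 else 0))
      + ((if b2 then v2 else 0) + (if c2 then w2 else 0)))
      = ((if b1 then ENNReal.ofReal v1 else 0) + (if c1 then ENNReal.ofReal w1 else 0))
      + ((if b2 then ENNReal.ofReal v2 else 0) + (if c2 then ENNReal.ofReal w2 else 0)) := by
    rw [ENNReal.ofReal_add (add_nonneg (ite_nonneg b1 v1 hv1) (ite_nonneg c1 w1 hw1))
        (add_nonneg (ite_nonneg b2 v2 hv2) (ite_nonneg c2 w2 hw2)),
      ENNReal.ofReal_add (ite_nonneg b1 v1 hv1) (ite_nonneg c1 w1 hw1),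
      ENNReal.ofReal_add (ite_nonneg b2 v2 hv2) (ite_nonneg c2 w2 hw2),
      ite_ofReal, ite_ofReal, ite_ofReal, ite_ofReal]
  have eR : ENNReal.ofReal (((if c1 then v1 else 0) + (if b1 then w1 else 0))
      + ((if c2 then v2 else 0) + (if b2 then w2 else 0)))
      = ((if c1 then ENNReal.ofReal v1 else 0) + (if b1 then ENNReal.ofReal w1 else 0))
      + ((if c2 then ENNReal.ofReal v2 else 0) + (if b2 then ENNReal.ofReal w2 else 0)) := by
    rw [ENNReal.ofReal_add (add_nonneg (ite_nonneg c1 v1 hv1) (ite_nonneg b1 w1 hw1))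
        (add_nonneg (ite_nonneg c2 v2 hv2) (ite_nonneg b2 w2 hw2)),
      ENNReal.ofReal_add (ite_nonneg c1 v1 hv1) (ite_nonneg b1 w1 hw1),
      ENNReal.ofReal_add (ite_nonneg c2 v2 hv2) (ite_nonneg b2 w2 hw2),
      ite_ofReal, ite_ofReal, ite_ofReal, ite_ofReal]
  rw [← eL, ← eR] at K
  exact (ENNReal.ofReal_le_ofReal_iff
    (add_nonneg (add_nonneg (ite_nonneg c1 v1 hv1) (ite_nonneg b1 w1 hw1))
      (add_nonneg (ite_nonneg c2 v2 hv2) (ite_nonneg b2 w2 hw2)))).mp K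

end CaseThree

namespace CaseThree

variable {n : ℕ}

lemma A1_00 (hn : 3 ≤ n) (r a : ℝ) (i : Fin n) (j : Fin (2 * n - 1))
    (hi : (i : ℕ) = 0) (hj : (j : ℕ) = 0) : A1 n r a i j = 0 := by
  simp only [A1, A0]
  rw [hi, hj, if_neg (fun h => by omega), if_pos (by omega), if_pos rfl]

lemma A1_0n (hn : 3 ≤ n) (r a : ℝ) (i : Fin n) (j : Fin (2 * n - 1))
    (hi : (i : ℕ) = 0) (hj : (j : ℕ) = n) : A1 n r a i j = ENNReal.ofReal r := by
  simp only [A1, A0]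
  rw [hi, hj, if_pos ⟨rfl, le_refl n⟩, if_pos rfl]

lemma A1_0n1 (hn : 3 ≤ n) (r a : ℝ) (i : Fin n) (j : Fin (2 * n - 1))
    (hi : (i : ℕ) = 0) (hj : (j : ℕ) = n + 1) : A1 n r a i j = ENNReal.ofReal a⁻¹ := by
  simp only [A1, A0]
  rw [hi, hj, if_pos ⟨rfl, by omega⟩, if_neg (by omega), show n + 1 - n = 1 by omega, pow_one]

lemma A1_0d (hn : 3 ≤ n) (r a : ℝ) (i : Fin n) (j : Fin (2 * n - 1))
    (hi : (i : ℕ) = 0) (hjlt : (j : ℕ) < n) (hj0 : (j : ℕ) ≠ 0) : A1 n r a i j = ⊤ := by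
  simp only [A1, A0]
  rw [hi, if_neg (fun h => by omega), if_pos hjlt, if_neg (fun h => by omega)]

lemma A1_1d1 (hn : 3 ≤ n) (r a : ℝ) (i : Fin n) (j : Fin (2 * n - 1))
    (hi : (i : ℕ) = 1) (hj : (j : ℕ) = 1) : A1 n r a i j = 0 := by
  simp only [A1, A0]
  rw [hi, hj, if_neg (fun h => by omega), if_pos (by omega), if_pos rfl]

lemma A1_1n (hn : 3 ≤ n) (r a : ℝ) (i : Fin n) (j : Fin (2 * n - 1))
    (hi : (i : ℕ) = 1) (hj : (j : ℕ) = n) : A1 n r a i j = 1 := by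
  simp only [A1, A0]
  rw [hi, hj, if_neg (fun h => by omega), if_neg (by omega), if_pos (by omega), if_pos rfl]

lemma A1_dummy_self (hn : 3 ≤ n) (r a : ℝ) (i : Fin n) (j : Fin (2 * n - 1))
    (hi : 2 ≤ (i : ℕ)) (hj : (j : ℕ) = (i : ℕ)) : A1 n r a i j = 0 := by
  simp only [A1, A0]
  have := i.isLt
  rw [if_neg (fun h => by omega), if_pos (by omega), if_pos hj]

lemma A1_proper_self (hn : 3 ≤ n) (r a : ℝ) (i : Fin n) (j : Fin (2 * n - 1))
    (hi : 3 ≤ (i : ℕ)) (hj : (j : ℕ) = n + (i : ℕ) - 1) :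
    A1 n r a i j = ENNReal.ofReal (a⁻¹ ^ ((i : ℕ) - 2)) := by
  simp only [A1, A0]
  rw [if_neg (fun h => by omega), if_neg (by omega), if_neg (by omega), if_pos hj,
    show (j : ℕ) - n - 1 = (i : ℕ) - 2 by omega]

lemma A1_top_d1 (hn : 3 ≤ n) (r a : ℝ) (i : Fin n) (j : Fin (2 * n - 1))
    (hi : 2 ≤ (i : ℕ)) (hj : (j : ℕ) = 1) : A1 n r a i j = ⊤ := by
  simp only [A1, A0]
  rw [hj, if_neg (fun h => by omega), if_pos (by omega), if_neg (by omega)]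

lemma A1_top_n (hn : 3 ≤ n) (r a : ℝ) (i : Fin n) (j : Fin (2 * n - 1))
    (hi : 2 ≤ (i : ℕ)) (hj : (j : ℕ) = n) : A1 n r a i j = ⊤ := by
  simp only [A1, A0]
  rw [hj, if_neg (fun h => by omega), if_neg (by omega), if_neg (by omega), if_neg (by omega)]

end CaseThree

set_option maxHeartbeats 1000000 in
open CaseThree in
/-- **Case 3.**  Let `(a,p)` be a truthful mechanism with finite
approximation ratio `ρ`.  If, on cost matrix `A1`, the mechanism allocates the proper task
`n+2` (0-based index `n+1`) to machine `1` (index `0`) but does not allocate the proper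
task `n+1` (index `n`) to machine `1`, then `ρ ≥ 1 + min {r⁻¹, a}`. -/
theorem case_three_lower_bound (n : ℕ) (hn : 3 ≤ n) (r a : ℝ)
    (hr0 : 0 < r) (hr1 : r < 1) (ha : 1 < a)
    (M : Mechanism n (2 * n - 1)) (hM : Truthful M)
    (ρ : ℝ) (hρ : ApproxRatioLE M ρ)
    (hsecond : (M.alloc (A1 n r a)).assign ⟨0, by omega⟩ ⟨n + 1, by omega⟩ = true)
    (hfirst : (M.alloc (A1 n r a)).assign ⟨0, by omega⟩ ⟨n, by omega⟩ = false) :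
    1 + min r⁻¹ a ≤ ρ := by
  classical
  obtain ⟨hρ1, hρ2⟩ := hρ
  have ha0 : (0:ℝ) < a := lt_trans one_pos ha
  have hainv0 : (0:ℝ) < a⁻¹ := inv_pos.mpr ha0
  have hia : a⁻¹ * a = 1 := inv_mul_cancel₀ (ne_of_gt ha0)
  have hainv1 : a⁻¹ < 1 := by nlinarith
  set μ := max r a⁻¹ with hμdef
  have hrμ : r ≤ μ := le_max_left _ _
  have haμ : a⁻¹ ≤ μ := le_max_right _ _
  have hμ0 : 0 < μ := lt_of_lt_of_le hainv0 haμ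
  have hμ1 : μ < 1 := max_lt hr1 hainv1
  have key : ∀ ε : ℝ, 0 < ε → ε < a⁻¹ → 1 + μ - ε ≤ ρ * (μ + 2*ε) := by
    intro ε hε0 hεa
    have hε1 : ε < 1 := lt_trans hεa hainv1
    have h0n : 0 < n := by omega
    have h1n : 1 < n := by omega
    have hq0 : 0 < 2*n-1 := by omega
    have hq1 : 1 < 2*n-1 := by omega
    have hqn : n < 2*n-1 := by omega
    have hqn1 : n+1 < 2*n-1 := by omega
    set i0 : Fin n := ⟨0, h0n⟩ with hi0def
    set i1 : Fin n := ⟨1, h1n⟩ with hi1def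
    set jd0 : Fin (2*n-1) := ⟨0, hq0⟩ with hjd0def
    set jd1 : Fin (2*n-1) := ⟨1, hq1⟩ with hjd1def
    set jn : Fin (2*n-1) := ⟨n, hqn⟩ with hjndef
    set jn1 : Fin (2*n-1) := ⟨n+1, hqn1⟩ with hjn1def
    have hi0v : (i0 : ℕ) = 0 := by rw [hi0def]
    have hi1v : (i1 : ℕ) = 1 := by rw [hi1def]
    have hjd0v : (jd0 : ℕ) = 0 := by rw [hjd0def]
    have hjd1v : (jd1 : ℕ) = 1 := by rw [hjd1def]
    have hjnv : (jn : ℕ) = n := by rw [hjndef]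
    have hjn1v : (jn1 : ℕ) = n+1 := by rw [hjn1def]
    set t1 := A1 n r a with ht1def
    set row0 : Fin (2*n-1) → ℝ≥0∞ := fun j =>
      if (j:ℕ) = n then ENNReal.ofReal (r+ε) else if (j:ℕ) = n+1 then ENNReal.ofReal ε
      else t1 i0 j with hrow0def
    set t2 := Function.update t1 i0 row0 with ht2def
    set row1 : Fin (2*n-1) → ℝ≥0∞ := fun j =>
      if (j:ℕ) = 1 then ENNReal.ofReal μ else if (j:ℕ) = n then ENNReal.ofReal (1-ε)
      else t2 i1 j with hrow1def
    set t3 := Function.update t2 i1 row1 with ht3def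
    -- row evaluation facts
    have hrow0_n : ∀ j : Fin (2*n-1), (j:ℕ) = n → row0 j = ENNReal.ofReal (r+ε) := by
      intro j h; simp only [hrow0def]; rw [if_pos h]
    have hrow0_n1 : ∀ j : Fin (2*n-1), (j:ℕ) = n+1 → row0 j = ENNReal.ofReal ε := by
      intro j h; simp only [hrow0def]; rw [if_neg (by omega), if_pos h]
    have hrow0_else : ∀ j : Fin (2*n-1), (j:ℕ) ≠ n → (j:ℕ) ≠ n+1 → row0 j = t1 i0 j := by
      intro j h h'; simp only [hrow0def]; rw [if_neg h, if_neg h']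
    have hrow1_1 : ∀ j : Fin (2*n-1), (j:ℕ) = 1 → row1 j = ENNReal.ofReal μ := by
      intro j h; simp only [hrow1def]; rw [if_pos h]
    have hrow1_n : ∀ j : Fin (2*n-1), (j:ℕ) = n → row1 j = ENNReal.ofReal (1-ε) := by
      intro j h; simp only [hrow1def]; rw [if_neg (by omega), if_pos h]
    have hrow1_else : ∀ j : Fin (2*n-1), (j:ℕ) ≠ 1 → (j:ℕ) ≠ n → row1 j = t2 i1 j := by
      intro j h h'; simp only [hrow1def]; rw [if_neg h, if_neg h']
    -- update transfer facts
    have ht2_0 : ∀ i : Fin n, (i:ℕ) = 0 → t2 i = row0 := by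
      intro i h
      have : i = i0 := Fin.ext (by rw [h, hi0v])
      rw [this, ht2def]; exact Function.update_self _ _ _
    have ht2_ne : ∀ i : Fin n, (i:ℕ) ≠ 0 → t2 i = t1 i := by
      intro i h
      rw [ht2def]
      exact Function.update_of_ne (fun he => h (by rw [he, hi0v])) _ _
    have ht3_1 : ∀ i : Fin n, (i:ℕ) = 1 → t3 i = row1 := by
      intro i h
      have : i = i1 := Fin.ext (by rw [h, hi1v])
      rw [this, ht3def]; exact Function.update_self _ _ _
    have ht3_ne : ∀ i : Fin n, (i:ℕ) ≠ 1 → t3 i = t2 i := by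
      intro i h
      rw [ht3def]
      exact Function.update_of_ne (fun he => h (by rw [he, hi1v])) _ _
    -- t1 entries via A1 lemmas
    have e_t1_0n : t1 i0 jn = ENNReal.ofReal r := by
      rw [ht1def]; exact A1_0n hn r a _ _ hi0v hjnv
    have e_t1_0n1 : t1 i0 jn1 = ENNReal.ofReal a⁻¹ := by
      rw [ht1def]; exact A1_0n1 hn r a _ _ hi0v hjn1v
    -- OPT bounds
    have hopt1 : optMakespan n (2*n-1) t1 ≤ ENNReal.ofReal 3 := by
      refine le_trans (iInf_le _ (mkAlloc (owner1 n hn))) (makespan_owner1_le hn t1 _ ?_ ?_ ?_ ?_)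
      · intro i jA jB jC hi hA hB hC
        rw [ht1def, A1_00 hn r a _ _ hi hA, A1_0n hn r a _ _ hi hB, A1_0n1 hn r a _ _ hi hC,
          zero_add, ← ENNReal.ofReal_add (le_of_lt hr0) (le_of_lt hainv0)]
        exact ENNReal.ofReal_le_ofReal (by linarith)
      · intro i j hi hj
        rw [ht1def, A1_1d1 hn r a _ _ hi hj]; exact zero_le
      · intro i j hi hj
        rw [ht1def]; exact A1_dummy_self hn r a _ _ hi hj
      · intro i j hi hj
        rw [ht1def, A1_proper_self hn r a _ _ hi hj]
        refine ENNReal.ofReal_le_ofReal ?_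
        have := pow_le_one₀ (le_of_lt hainv0) (le_of_lt hainv1) (n := (i:ℕ) - 2)
        linarith
    have hopt2 : optMakespan n (2*n-1) t2 ≤ ENNReal.ofReal 3 := by
      refine le_trans (iInf_le _ (mkAlloc (owner1 n hn))) (makespan_owner1_le hn t2 _ ?_ ?_ ?_ ?_)
      · intro i jA jB jC hi hA hB hC
        rw [ht2_0 i hi, hrow0_else jA (by omega) (by omega), ht1def,
          A1_00 hn r a _ _ hi0v hA, hrow0_n jB hB, hrow0_n1 jC hC, zero_add,
          ← ENNReal.ofReal_add (by linarith) (le_of_lt hε0)]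
        exact ENNReal.ofReal_le_ofReal (by linarith)
      · intro i j hi hj
        rw [ht2_ne i (by omega), ht1def, A1_1d1 hn r a _ _ hi hj]; exact zero_le
      · intro i j hi hj
        rw [ht2_ne i (by omega), ht1def]; exact A1_dummy_self hn r a _ _ hi hj
      · intro i j hi hj
        rw [ht2_ne i (by omega), ht1def, A1_proper_self hn r a _ _ hi hj]
        refine ENNReal.ofReal_le_ofReal ?_
        have := pow_le_one₀ (le_of_lt hainv0) (le_of_lt hainv1) (n := (i:ℕ) - 2)
        linarith
    have hopt3 : optMakespan n (2*n-1) t3 ≤ ENNReal.ofReal (μ + 2*ε) := by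
      refine le_trans (iInf_le _ (mkAlloc (owner1 n hn))) (makespan_owner1_le hn t3 _ ?_ ?_ ?_ ?_)
      · intro i jA jB jC hi hA hB hC
        rw [ht3_ne i (by omega), ht2_0 i hi, hrow0_else jA (by omega) (by omega), ht1def,
          A1_00 hn r a _ _ hi0v hA, hrow0_n jB hB, hrow0_n1 jC hC, zero_add,
          ← ENNReal.ofReal_add (by linarith) (le_of_lt hε0)]
        exact ENNReal.ofReal_le_ofReal (by linarith)
      · intro i j hi hj
        rw [ht3_1 i hi, hrow1_1 j hj]
        exact ENNReal.ofReal_le_ofReal (by linarith)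
      · intro i j hi hj
        rw [ht3_ne i (by omega), ht2_ne i (by omega), ht1def]
        exact A1_dummy_self hn r a _ _ hi hj
      · intro i j hi hj
        rw [ht3_ne i (by omega), ht2_ne i (by omega), ht1def,
          A1_proper_self hn r a _ _ hi hj]
        refine ENNReal.ofReal_le_ofReal ?_
        have h2 : a⁻¹ ^ ((i:ℕ) - 2) ≤ a⁻¹ ^ 1 :=
          pow_le_pow_of_le_one (le_of_lt hainv0) (le_of_lt hainv1) (by omega)
        rw [pow_one] at h2
        linarith
    -- finiteness of mechanism makespans
    have hfin1 : makespan (M.alloc t1) t1 ≠ ⊤ :=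
      ne_top_of_le_ne_top (ENNReal.mul_ne_top ENNReal.ofReal_ne_top ENNReal.ofReal_ne_top)
        (le_trans (hρ2 t1) (mul_le_mul_right hopt1 _))
    have hfin2 : makespan (M.alloc t2) t2 ≠ ⊤ :=
      ne_top_of_le_ne_top (ENNReal.mul_ne_top ENNReal.ofReal_ne_top ENNReal.ofReal_ne_top)
        (le_trans (hρ2 t2) (mul_le_mul_right hopt2 _))
    have hfin3 : makespan (M.alloc t3) t3 ≠ ⊤ :=
      ne_top_of_le_ne_top (ENNReal.mul_ne_top ENNReal.ofReal_ne_top ENNReal.ofReal_ne_top)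
        (le_trans (hρ2 t3) (mul_le_mul_right hopt3 _))
    -- machineCost finiteness
    have hc1 : machineCost (M.alloc t1) (t1 i0) i0 ≠ ⊤ :=
      ne_top_of_le_ne_top hfin1 (machineCost_le_makespan _ _ _)
    have hc4 : machineCost (M.alloc t2) row0 i0 ≠ ⊤ := by
      have h := machineCost_le_makespan (M.alloc t2) t2 i0
      rw [ht2_0 i0 hi0v] at h
      exact ne_top_of_le_ne_top hfin2 h
    -- WMON site 1
    have hag1 : ∀ j, j ≠ jn → j ≠ jn1 → row0 j = t1 i0 j := by
      intro j h1 h2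
      refine hrow0_else j (fun hv => h1 (Fin.ext (by rw [hv, hjnv])))
        (fun hv => h2 (Fin.ext (by rw [hv, hjn1v])))
    have htr1 : ∀ j, t1 i0 j ≠ ⊤ → row0 j ≠ ⊤ := by
      intro j h
      by_cases hv : (j:ℕ) = n
      · rw [hrow0_n j hv]; exact ENNReal.ofReal_ne_top
      by_cases hv' : (j:ℕ) = n+1
      · rw [hrow0_n1 j hv']; exact ENNReal.ofReal_ne_top
      · rw [hrow0_else j hv hv']; exact h
    have htr1' : ∀ j, row0 j ≠ ⊤ → t1 i0 j ≠ ⊤ := by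
      intro j h
      by_cases hv : (j:ℕ) = n
      · rw [ht1def, A1_0n hn r a _ _ hi0v hv]; exact ENNReal.ofReal_ne_top
      by_cases hv' : (j:ℕ) = n+1
      · rw [ht1def, A1_0n1 hn r a _ _ hi0v hv']; exact ENNReal.ofReal_ne_top
      · rw [← hrow0_else j hv hv']; exact h
    have hneJ : jn ≠ jn1 := Fin.ne_of_val_ne (by rw [hjnv, hjn1v]; omega)
    have K1 := wmon_two_real M hM t1 i0 row0 jn jn1 hneJ hag1 hc1
      (by rw [← ht2def]; exact hc4) htr1 htr1'
      r a⁻¹ (r+ε) ε (le_of_lt hr0) (le_of_lt hainv0) (by linarith) (le_of_lt hε0)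
      e_t1_0n e_t1_0n1 (hrow0_n jn hjnv) (hrow0_n1 jn1 hjn1v)
    rw [← ht2def] at K1
    have hfir : (M.alloc t1).assign i0 jn = false := by
      rw [hi0def, hjndef, ht1def]; exact hfirst
    have hsec : (M.alloc t1).assign i0 jn1 = true := by
      rw [hi0def, hjn1def, ht1def]; exact hsecond
    rw [hfir, hsec] at K1
    have hxy : (M.alloc t2).assign i0 jn = false ∧ (M.alloc t2).assign i0 jn1 = true := by
      cases hx' : (M.alloc t2).assign i0 jn <;> cases hy' : (M.alloc t2).assign i0 jn1 <;>
        rw [hx', hy'] at K1 <;> simp at K1 <;>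
        first
          | exact ⟨rfl, rfl⟩
          | (exfalso; linarith)
    obtain ⟨hx, hy⟩ := hxy
    -- forced assignments in t2
    have hb1 : (M.alloc t2).assign i1 jd1 = true := by
      apply assign_forced _ t2 i1 jd1 hfin2
      intro i hne
      have hiv : (i:ℕ) ≠ 1 := fun h => hne (Fin.ext (by rw [h, hi1v]))
      rcases Nat.eq_zero_or_pos (i:ℕ) with h0 | hpos
      · rw [ht2_0 i h0, hrow0_else jd1 (by omega) (by omega), ht1def]
        exact A1_0d hn r a _ _ hi0v (by omega) (by omega)
      · rw [ht2_ne i (by omega), ht1def]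
        exact A1_top_d1 hn r a _ _ (by omega) hjd1v
    have hb2 : (M.alloc t2).assign i1 jn = true := by
      apply assign_forced_two _ t2 i0 i1 jn hfin2 _ hx
      intro i hne0 hne1
      have hiv0 : (i:ℕ) ≠ 0 := fun h => hne0 (Fin.ext (by rw [h, hi0v]))
      have hiv1 : (i:ℕ) ≠ 1 := fun h => hne1 (Fin.ext (by rw [h, hi1v]))
      rw [ht2_ne i hiv0, ht1def]
      exact A1_top_n hn r a _ _ (by omega) hjnv
    -- forced dummy in t3
    have hcT : (M.alloc t3).assign i1 jd1 = true := by
      apply assign_forced _ t3 i1 jd1 hfin3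
      intro i hne
      have hiv : (i:ℕ) ≠ 1 := fun h => hne (Fin.ext (by rw [h, hi1v]))
      rcases Nat.eq_zero_or_pos (i:ℕ) with h0 | hpos
      · rw [ht3_ne i (by omega), ht2_0 i h0, hrow0_else jd1 (by omega) (by omega), ht1def]
        exact A1_0d hn r a _ _ hi0v (by omega) (by omega)
      · rw [ht3_ne i (by omega), ht2_ne i (by omega), ht1def]
        exact A1_top_d1 hn r a _ _ (by omega) hjd1v
    -- WMON site 2
    have hc1' : machineCost (M.alloc t2) (t2 i1) i1 ≠ ⊤ :=
      ne_top_of_le_ne_top hfin2 (machineCost_le_makespan _ _ _)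
    have hc4' : machineCost (M.alloc t3) row1 i1 ≠ ⊤ := by
      have h := machineCost_le_makespan (M.alloc t3) t3 i1
      rw [ht3_1 i1 hi1v] at h
      exact ne_top_of_le_ne_top hfin3 h
    have hag2 : ∀ j, j ≠ jd1 → j ≠ jn → row1 j = t2 i1 j := by
      intro j h1 h2
      refine hrow1_else j (fun hv => h1 (Fin.ext (by rw [hv, hjd1v])))
        (fun hv => h2 (Fin.ext (by rw [hv, hjnv])))
    have e_t2_1d1 : t2 i1 jd1 = ENNReal.ofReal 0 := by
      rw [ht2_ne i1 (by omega), ht1def, A1_1d1 hn r a _ _ hi1v hjd1v, ENNReal.ofReal_zero]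
    have e_t2_1n : t2 i1 jn = ENNReal.ofReal 1 := by
      rw [ht2_ne i1 (by omega), ht1def, A1_1n hn r a _ _ hi1v hjnv, ENNReal.ofReal_one]
    have htr2 : ∀ j, t2 i1 j ≠ ⊤ → row1 j ≠ ⊤ := by
      intro j h
      by_cases hv : (j:ℕ) = 1
      · rw [hrow1_1 j hv]; exact ENNReal.ofReal_ne_top
      by_cases hv' : (j:ℕ) = n
      · rw [hrow1_n j hv']; exact ENNReal.ofReal_ne_top
      · rw [hrow1_else j hv hv']; exact h
    have htr2' : ∀ j, row1 j ≠ ⊤ → t2 i1 j ≠ ⊤ := by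
      intro j h
      by_cases hv : (j:ℕ) = 1
      · rw [ht2_ne i1 (by omega), ht1def, A1_1d1 hn r a _ _ hi1v hv]
        simp
      by_cases hv' : (j:ℕ) = n
      · rw [ht2_ne i1 (by omega), ht1def, A1_1n hn r a _ _ hi1v hv']
        simp
      · rw [← hrow1_else j hv hv']; exact h
    have hneJ2 : jd1 ≠ jn := Fin.ne_of_val_ne (by rw [hjd1v, hjnv]; omega)
    have K2 := wmon_two_real M hM t2 i1 row1 jd1 jn hneJ2 hag2 hc1'
      (by rw [← ht3def]; exact hc4') htr2 htr2'
      0 1 μ (1-ε) (le_refl 0) zero_le_one (le_of_lt hμ0) (by linarith)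
      e_t2_1d1 e_t2_1n (hrow1_1 jd1 hjd1v) (hrow1_n jn hjnv)
    rw [← ht3def] at K2
    rw [hb1, hb2, hcT] at K2
    have hw : (M.alloc t3).assign i1 jn = true := by
      cases hw' : (M.alloc t3).assign i1 jn
      · exfalso; rw [hw'] at K2; simp at K2; linarith
      · rfl
    -- final chain
    have hload : ENNReal.ofReal (μ + (1-ε)) ≤ makespan (M.alloc t3) t3 := by
      rw [ENNReal.ofReal_add (le_of_lt hμ0) (by linarith)]
      refine le_trans ?_ (machineCost_le_makespan (M.alloc t3) t3 i1)
      rw [ht3_1 i1 hi1v]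
      have h2 := two_terms_le_machineCost (M.alloc t3) row1 i1 jd1 jn hneJ2 hcT hw
      rw [hrow1_1 jd1 hjd1v, hrow1_n jn hjnv] at h2
      exact h2
    have hchain : ENNReal.ofReal (μ + (1-ε)) ≤ ENNReal.ofReal ρ * ENNReal.ofReal (μ + 2*ε) :=
      le_trans hload (le_trans (hρ2 t3) (mul_le_mul_right hopt3 _))
    rw [← ENNReal.ofReal_mul (by linarith : (0:ℝ) ≤ ρ)] at hchain
    have hfinal := (ENNReal.ofReal_le_ofReal_iff
      (mul_nonneg (by linarith) (by linarith))).mp hchain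
    linarith
  -- pass to the limit ε → 0
  have hcore : 1 + μ ≤ ρ * μ := by
    by_contra hlt
    push_neg at hlt
    have hgap : 0 < 1 + μ - ρ*μ := by linarith
    have hd2 : 0 < (1 + μ - ρ*μ) / (2*(2*ρ+1)) := div_pos hgap (by linarith)
    set δ := min (a⁻¹/2) ((1 + μ - ρ*μ) / (2*(2*ρ+1))) with hδdef
    have hδ0 : 0 < δ := lt_min (by linarith) hd2
    have hδa : δ < a⁻¹ := lt_of_le_of_lt (min_le_left _ _) (by linarith)
    have h := key δ hδ0 hδa
    have hδle : δ ≤ (1 + μ - ρ*μ) / (2*(2*ρ+1)) := min_le_right _ _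
    have h2 : δ * (2*(2*ρ+1)) ≤ 1 + μ - ρ*μ := by
      rw [← le_div_iff₀ (by linarith : (0:ℝ) < 2*(2*ρ+1))]
      exact hδle
    nlinarith
  have hμinv : min r⁻¹ a ≤ μ⁻¹ := by
    rcases max_cases r a⁻¹ with ⟨hm, _⟩ | ⟨hm, _⟩
    · rw [hμdef, hm]; exact min_le_left _ _
    · rw [hμdef, hm, inv_inv]; exact min_le_right _ _
  have h3 : 1 + μ⁻¹ ≤ ρ := by
    have hdiv : (1 + μ) / μ ≤ ρ := (div_le_iff₀ hμ0).mpr (by linarith)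
    have e : (1 + μ)/μ = 1/μ + μ/μ := add_div 1 μ μ
    rw [div_self (ne_of_gt hμ0), one_div] at e
    linarith
  linarith
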